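/- Let u_1, u_2 be convex real-valued functions on X = [x̲, x̄] (with x̲ < x̄), let T = [t̲, t̄] (with t̲ < t̄), and for j = 1, 2 let x_j : T → X be a Lebesgue-measurable selection with x_j(t) ∈ argmax_{x ∈ X} (x·t − u_j(x)) for every t ∈ T. If sup_{x ∈ X} |u_1(x) − u_2(x)| ≤ δ for some δ > 0, then ∫_{t̲}^{t̄} |x_1(t) − x_2(t)| dt ≤ √(2δ) · ((x̄ − x̲) + (t̄ − t̲)) / 2. -/

import Mathlib

open MeasureTheory Set

section Aux

lemma riemann_squeeze (a b : ℝ) (hab : a ≤ b) (f φ : ℝ → ℝ)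
    (hmono : MonotoneOn f (Icc a b))
    (hsub : ∀ s ∈ Icc a b, ∀ t ∈ Icc a b, f t * (s - t) ≤ φ s - φ t) :
    ∫ t in a..b, f t = φ b - φ a := by
  have hint : ∀ c d : ℝ, c ∈ Icc a b → d ∈ Icc a b → IntervalIntegrable f volume c d := by
    intro c d hc hd
    apply MonotoneOn.intervalIntegrable
    exact hmono.mono (uIcc_subset_Icc hc hd)
  have key : ∀ n : ℕ, 0 < n →
      |(∫ t in a..b, f t) - (φ b - φ a)| ≤ (f b - f a) * (b - a) / n := by
    intro n hn
    set Δ : ℝ := (b - a) / n with hΔdef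
    have hΔ : 0 ≤ Δ := div_nonneg (by linarith) (Nat.cast_nonneg n)
    set p : ℕ → ℝ := fun i => a + i * Δ with hp
    have hpa : p 0 = a := by simp [hp]
    have hpb : p n = b := by
      simp only [hp, hΔdef]
      rw [mul_div_assoc', mul_div_cancel_left₀ _ (Nat.cast_ne_zero.mpr hn.ne')]; ring
    have hmonop : ∀ i j : ℕ, i ≤ j → p i ≤ p j := by
      intro i j hij
      have : (i:ℝ) ≤ j := by exact_mod_cast hij
      simp only [hp]
      nlinarith
    have hmem : ∀ i : ℕ, i ≤ n → p i ∈ Icc a b := by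
      intro i hi
      constructor
      · rw [← hpa]; exact hmonop 0 i (Nat.zero_le i)
      · rw [← hpb]; exact hmonop i n hi
    have hstep : ∀ i : ℕ, p (i+1) - p i = Δ := by
      intro i; simp only [hp]; push_cast; ring
    have hsum1 : ∑ i ∈ Finset.range n, ∫ t in p i..p (i+1), f t = ∫ t in a..b, f t := by
      rw [intervalIntegral.sum_integral_adjacent_intervals (fun i hi => hint _ _
        (hmem i (le_of_lt hi)) (hmem (i+1) hi))]
      rw [hpa, hpb]
    have hsum2 : ∑ i ∈ Finset.range n, (φ (p (i+1)) - φ (p i)) = φ b - φ a := by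
      rw [Finset.sum_range_sub (fun i => φ (p i))]
      rw [hpa, hpb]
    have hsum3 : ∑ i ∈ Finset.range n, (f (p (i+1)) - f (p i)) * Δ = (f b - f a) * Δ := by
      rw [← Finset.sum_mul, Finset.sum_range_sub (fun i => f (p i)), hpa, hpb]
    have hpiece : ∀ i ∈ Finset.range n,
        |(∫ t in p i..p (i+1), f t) - (φ (p (i+1)) - φ (p i))| ≤ (f (p (i+1)) - f (p i)) * Δ := by
      intro i hi
      rw [Finset.mem_range] at hi
      have h1 : p i ∈ Icc a b := hmem i hi.le
      have h2 : p (i+1) ∈ Icc a b := hmem (i+1) hi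
      have hle : p i ≤ p (i+1) := hmonop i (i+1) (Nat.le_succ i)
      have hIlow : f (p i) * Δ ≤ ∫ t in p i..p (i+1), f t := by
        have := intervalIntegral.integral_mono_on (μ := volume) hle
          (intervalIntegrable_const (c := f (p i))) (hint _ _ h1 h2)
          (fun x hx => hmono h1 (⟨le_trans h1.1 hx.1, le_trans hx.2 h2.2⟩) hx.1)
        rwa [intervalIntegral.integral_const, smul_eq_mul, hstep i, mul_comm] at this
      have hIhigh : (∫ t in p i..p (i+1), f t) ≤ f (p (i+1)) * Δ := by
        have := intervalIntegral.integral_mono_on (μ := volume) hle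
          (hint _ _ h1 h2) (intervalIntegrable_const (c := f (p (i+1))))
          (fun x hx => hmono (⟨le_trans h1.1 hx.1, le_trans hx.2 h2.2⟩) h2 hx.2)
        rwa [intervalIntegral.integral_const, smul_eq_mul, hstep i, mul_comm] at this
      have hφlow : f (p i) * Δ ≤ φ (p (i+1)) - φ (p i) := by
        have := hsub (p (i+1)) h2 (p i) h1
        rwa [show p (i+1) - p i = Δ from hstep i] at this
      have hφhigh : φ (p (i+1)) - φ (p i) ≤ f (p (i+1)) * Δ := by
        have := hsub (p i) h1 (p (i+1)) h2
        have e : p i - p (i+1) = -Δ := by linarith [hstep i]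
        rw [e, mul_neg] at this
        linarith
      rw [abs_le]
      constructor <;> nlinarith
    calc |(∫ t in a..b, f t) - (φ b - φ a)|
        = |∑ i ∈ Finset.range n, ((∫ t in p i..p (i+1), f t) - (φ (p (i+1)) - φ (p i)))| := by
          rw [Finset.sum_sub_distrib, hsum1, hsum2]
      _ ≤ ∑ i ∈ Finset.range n, |(∫ t in p i..p (i+1), f t) - (φ (p (i+1)) - φ (p i))| :=
          Finset.abs_sum_le_sum_abs _ _
      _ ≤ ∑ i ∈ Finset.range n, (f (p (i+1)) - f (p i)) * Δ := Finset.sum_le_sum hpiece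
      _ = (f b - f a) * Δ := hsum3
      _ = (f b - f a) * (b - a) / n := by rw [hΔdef]; ring
  have habs : |(∫ t in a..b, f t) - (φ b - φ a)| = 0 := by
    by_contra hne
    have hpos : 0 < |(∫ t in a..b, f t) - (φ b - φ a)| :=
      lt_of_le_of_ne (abs_nonneg _) (Ne.symm hne)
    obtain ⟨n, hn⟩ := exists_nat_gt ((f b - f a) * (b - a) / |(∫ t in a..b, f t) - (φ b - φ a)|)
    have hn0 : 0 < n := by
      by_contra h
      push_neg at h
      interval_cases n
      · simp at hn
        have hfa : 0 ≤ (f b - f a) * (b - a) := by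
          have := hmono (left_mem_Icc.2 hab) (right_mem_Icc.2 hab) hab
          nlinarith
        nlinarith [div_nonneg hfa (le_of_lt hpos)]
    have := key n hn0
    rw [div_lt_iff₀ hpos] at hn
    have h2 : (f b - f a) * (b - a) / n < |(∫ t in a..b, f t) - (φ b - φ a)| := by
      rw [div_lt_iff₀ (by exact_mod_cast hn0 : (0:ℝ) < n)]
      nlinarith
    linarith
  have := abs_eq_zero.mp habs
  linarith [this]

lemma upperset_integral (a b : ℝ) (hab : a ≤ b) (h : ℝ → ℝ)
    (U : Set ℝ) (hUsub : U ⊆ Icc a b)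
    (hup : ∀ t ∈ U, ∀ s ∈ Icc a b, t ≤ s → s ∈ U) :
    ∃ τ ∈ Icc a b, ∫ t in U, h t = ∫ t in Icc τ b, h t := by
  rcases eq_empty_or_nonempty U with hU | hU
  · refine ⟨b, right_mem_Icc.2 hab, ?_⟩
    rw [hU, MeasureTheory.integral_Icc_eq_integral_Ioc, Set.Ioc_self]
  · have hbdd : BddBelow U := ⟨a, fun x hx => (hUsub hx).1⟩
    set τ := sInf U with hτ
    have hτa : a ≤ τ := le_csInf hU (fun x hx => (hUsub hx).1)
    obtain ⟨u0, hu0⟩ := id hU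
    have hτb : τ ≤ b := le_trans (csInf_le hbdd hu0) (hUsub hu0).2
    refine ⟨τ, ⟨hτa, hτb⟩, ?_⟩
    have hsub2 : U ⊆ Icc τ b := fun x hx => ⟨csInf_le hbdd hx, (hUsub hx).2⟩
    have hsup2 : Ioc τ b ⊆ U := by
      intro t htm
      obtain ⟨u, hu, hut⟩ := exists_lt_of_csInf_lt hU htm.1
      exact hup u hu t ⟨le_trans hτa (le_of_lt htm.1), htm.2⟩ (le_of_lt hut)
    apply MeasureTheory.setIntegral_congr_set
    rw [MeasureTheory.ae_eq_set]
    constructor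
    · rw [Set.diff_eq_empty.mpr hsub2]; exact measure_empty
    · refine measure_mono_null ?_ (Real.volume_singleton (a := τ))
      intro t htm
      simp only [mem_diff, mem_Icc] at htm
      rcases eq_or_lt_of_le htm.1.1 with he | hlt
      · simp [← he]
      · exact absurd (hsup2 ⟨hlt, htm.1.2⟩) htm.2

lemma mono_part_bound (a b δ B : ℝ) (hab : a ≤ b) (hδ : 0 ≤ δ) (P h d : ℝ → ℝ)
    (hPmono : MonotoneOn P (Icc a b)) (hPm : Measurable P)
    (hhm : Measurable h) (hB : ∀ t ∈ Icc a b, |h t| ≤ B)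
    (hd : ∀ τ ∈ Icc a b, ∫ t in Icc τ b, h t = d b - d τ)
    (hdb : ∀ t ∈ Icc a b, |d t| ≤ δ) :
    |(∫ t in Icc a b, (P t - P a) * h t) - (P b - P a) * d b| ≤ δ * (P b - P a) := by
  have ha : a ∈ Icc a b := left_mem_Icc.2 hab
  have hb : b ∈ Icc a b := right_mem_Icc.2 hab
  have hPab : P a ≤ P b := hPmono ha hb hab
  set S : Set ℝ := Ioc (P a) (P b) with hS
  set F : ℝ → ℝ → ℝ := fun t y => if y < P t then h t else 0 with hF
  -- integrability on the product
  have hmeasF : Measurable (Function.uncurry F) := by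
    apply Measurable.ite
    · exact measurableSet_lt measurable_snd (hPm.comp measurable_fst)
    · exact hhm.comp measurable_fst
    · exact measurable_const
  haveI : IsFiniteMeasure (volume.restrict (Icc a b)) :=
    ⟨by rw [Measure.restrict_apply_univ]; exact measure_Icc_lt_top⟩
  haveI : IsFiniteMeasure (volume.restrict S) :=
    ⟨by rw [Measure.restrict_apply_univ]; exact measure_Ioc_lt_top⟩
  have hprodres : (volume.restrict (Icc a b)).prod (volume.restrict S)
      = (volume.prod volume).restrict ((Icc a b) ×ˢ S) := Measure.prod_restrict _ _
  have hintF : Integrable (Function.uncurry F)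
      ((volume.restrict (Icc a b)).prod (volume.restrict S)) := by
    apply Integrable.mono' (g := fun _ => |B|) (integrable_const _)
      hmeasF.aestronglyMeasurable
    rw [hprodres]
    filter_upwards [ae_restrict_mem ((measurableSet_Icc).prod measurableSet_Ioc)] with q hq
    have hq1 : q.1 ∈ Icc a b := hq.1
    have : |F q.1 q.2| ≤ B := by
      simp only [hF]
      split
      · exact hB q.1 hq1
      · simpa using le_trans (abs_nonneg _) (hB q.1 hq1)
    calc ‖Function.uncurry F q‖ = |F q.1 q.2| := rfl
      _ ≤ B := this
      _ ≤ |B| := le_abs_self B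
  -- swap
  have hswap := MeasureTheory.integral_integral_swap hintF
  -- LHS evaluation
  have hlhs : ∫ t in Icc a b, ∫ y in S, F t y = ∫ t in Icc a b, (P t - P a) * h t := by
    apply MeasureTheory.setIntegral_congr_fun measurableSet_Icc
    intro t htm
    have hPt : P a ≤ P t := hPmono ha htm htm.1
    have hPtb : P t ≤ P b := hPmono htm hb htm.2
    have heq : ∀ y : ℝ, F t y = (Iio (P t)).indicator (fun _ => h t) y := by
      intro y; simp [hF, Set.indicator_apply, Set.mem_Iio]
    simp_rw [heq]
    rw [MeasureTheory.setIntegral_indicator measurableSet_Iio]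
    rw [MeasureTheory.setIntegral_const]
    have : S ∩ Iio (P t) = Ioo (P a) (P t) := by
      ext y
      simp only [hS, mem_inter_iff, mem_Ioc, mem_Iio, mem_Ioo]
      constructor
      · rintro ⟨⟨h1, h2⟩, h3⟩; exact ⟨h1, h3⟩
      · rintro ⟨h1, h2⟩; exact ⟨⟨h1, le_trans (le_of_lt h2) hPtb⟩, h2⟩
    rw [this, measureReal_def, Real.volume_Ioo, smul_eq_mul, ENNReal.toReal_ofReal (by linarith)]
  -- RHS pointwise bound
  have hinner : ∀ y ∈ S, |(∫ t in Icc a b, F t y) - d b| ≤ δ := by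
    intro y _
    have hindic : ∀ t : ℝ, F t y = ({t : ℝ | y < P t}).indicator h t := by
      intro t; simp [hF, Set.indicator_apply]
    simp_rw [hindic]
    rw [MeasureTheory.setIntegral_indicator (measurableSet_lt measurable_const hPm)]
    obtain ⟨τ, hτm, hτeq⟩ := upperset_integral a b hab h (Icc a b ∩ {t | y < P t})
      inter_subset_left
      (by
        rintro t ⟨htm, hty⟩ s hsm hts
        exact ⟨hsm, lt_of_lt_of_le hty (hPmono htm hsm hts)⟩)
    rw [hτeq, hd τ hτm]
    simpa using hdb τ hτm
  -- assemble
  have hIy : Integrable (fun y => ∫ t in Icc a b, F t y) (volume.restrict S) :=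
    hintF.integral_prod_right
  have houter : (∫ y in S, ((∫ t in Icc a b, F t y) - d b))
      = (∫ y in S, ∫ t in Icc a b, F t y) - (P b - P a) * d b := by
    rw [MeasureTheory.integral_sub hIy (integrable_const _)]
    rw [MeasureTheory.setIntegral_const, hS, measureReal_def, Real.volume_Ioc, smul_eq_mul,
      ENNReal.toReal_ofReal (by linarith)]
  have hbound : |∫ y in S, ((∫ t in Icc a b, F t y) - d b)| ≤ δ * (P b - P a) := by
    have := MeasureTheory.norm_setIntegral_le_of_norm_le_const (μ := volume) (s := S)
      (f := fun y => (∫ t in Icc a b, F t y) - d b) (C := δ)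
      measure_Ioc_lt_top (fun y hy => by simpa using hinner y hy)
    rw [hS, measureReal_def, Real.volume_Ioc, ENNReal.toReal_ofReal (by linarith)] at this
    simpa using this
  rw [← hlhs, hswap]
  rw [houter] at hbound
  exact hbound

end Aux

set_option maxHeartbeats 1000000 in
/-- One-dimensional conjugate stability.
If `u₁, u₂` are convex on `X = [xl, xu]`, `x₁, x₂` are measurable argmax selections of
`x ↦ x·t − uⱼ(x)` over `X` for `t ∈ T = [tl, tu]`, and `sup_{x ∈ X} |u₁ x − u₂ x| ≤ δ`,
then `∫_T |x₁(t) − x₂(t)| dt ≤ √(2δ)·((xu − xl) + (tu − tl))/2`. -/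
theorem conjugate_selection_l1_bound_one_dim
    (xl xu tl tu δ : ℝ) (hx : xl < xu) (ht : tl < tu) (hδ : 0 < δ)
    (u1 u2 : ℝ → ℝ)
    (hu1 : ConvexOn ℝ (Set.Icc xl xu) u1)
    (hu2 : ConvexOn ℝ (Set.Icc xl xu) u2)
    (x1 x2 : ℝ → ℝ)
    (hm1 : Measurable x1) (hm2 : Measurable x2)
    (hsel1 : ∀ t ∈ Set.Icc tl tu, x1 t ∈ Set.Icc xl xu ∧
      ∀ x ∈ Set.Icc xl xu, x * t - u1 x ≤ x1 t * t - u1 (x1 t))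
    (hsel2 : ∀ t ∈ Set.Icc tl tu, x2 t ∈ Set.Icc xl xu ∧
      ∀ x ∈ Set.Icc xl xu, x * t - u2 x ≤ x2 t * t - u2 (x2 t))
    (hclose : ∀ x ∈ Set.Icc xl xu, |u1 x - u2 x| ≤ δ) :
    ∫ t in Set.Icc tl tu, |x1 t - x2 t| ≤
      Real.sqrt (2 * δ) * ((xu - xl) + (tu - tl)) / 2 := by
  have htl : tl ∈ Icc tl tu := left_mem_Icc.2 ht.le
  have htu : tu ∈ Icc tl tu := right_mem_Icc.2 ht.le
  set η : ℝ := Real.sqrt (2 * δ) with hηdef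
  have hηpos : 0 < η := Real.sqrt_pos.2 (by linarith)
  have hηsq : η ^ 2 = 2 * δ := Real.sq_sqrt (by linarith)
  set m : ℝ := 2 * η with hmdef
  have hm0 : 0 < m := by positivity
  set H : ℝ := xu - xl with hHdef
  set W : ℝ := tu - tl with hWdef
  have hH0 : 0 < H := by simp only [hHdef]; linarith
  have hW0 : 0 < W := by simp only [hWdef]; linarith
  -- monotonicity of the selections
  have hmono1 : MonotoneOn x1 (Icc tl tu) := by
    intro s hs t ht' hst
    rcases eq_or_lt_of_le hst with he | hlt
    · rw [he]
    · by_contra hgt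
      push_neg at hgt
      have h1 := (hsel1 s hs).2 (x1 t) (hsel1 t ht').1
      have h2 := (hsel1 t ht').2 (x1 s) (hsel1 s hs).1
      nlinarith
  have hmono2 : MonotoneOn x2 (Icc tl tu) := by
    intro s hs t ht' hst
    rcases eq_or_lt_of_le hst with he | hlt
    · rw [he]
    · by_contra hgt
      push_neg at hgt
      have h1 := (hsel2 s hs).2 (x2 t) (hsel2 t ht').1
      have h2 := (hsel2 t ht').2 (x2 s) (hsel2 s hs).1
      nlinarith
  -- conjugate-type functions
  set φ : ℝ → ℝ := fun t => x1 t * t - u1 (x1 t) with hφdef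
  set ψ : ℝ → ℝ := fun t => x2 t * t - u2 (x2 t) with hψdef
  set d : ℝ → ℝ := fun t => φ t - ψ t with hddef
  have hsubgrad1 : ∀ s ∈ Icc tl tu, ∀ t ∈ Icc tl tu, x1 t * (s - t) ≤ φ s - φ t := by
    intro s hs t ht'
    have := (hsel1 s hs).2 (x1 t) (hsel1 t ht').1
    simp only [hφdef]
    nlinarith
  have hsubgrad2 : ∀ s ∈ Icc tl tu, ∀ t ∈ Icc tl tu, x2 t * (s - t) ≤ ψ s - ψ t := by
    intro s hs t ht'
    have := (hsel2 s hs).2 (x2 t) (hsel2 t ht').1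
    simp only [hψdef]
    nlinarith
  have hdb : ∀ t ∈ Icc tl tu, |d t| ≤ δ := by
    intro t ht'
    have h1 := (hsel1 t ht').2 (x2 t) (hsel2 t ht').1
    have h2 := (hsel2 t ht').2 (x1 t) (hsel1 t ht').1
    have hc1 := abs_le.1 (hclose (x1 t) (hsel1 t ht').1)
    have hc2 := abs_le.1 (hclose (x2 t) (hsel2 t ht').1)
    rw [abs_le]
    simp only [hddef, hφdef, hψdef]
    constructor <;> nlinarith
  -- integral identity
  have hd : ∀ τ ∈ Icc tl tu, ∫ t in Icc τ tu, (x1 t - x2 t) = d tu - d τ := by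
    intro τ hτ
    have hτu : τ ≤ tu := hτ.2
    have hsubI : Icc τ tu ⊆ Icc tl tu := Icc_subset_Icc hτ.1 le_rfl
    have hu1' : MonotoneOn x1 (uIcc τ tu) := by
      rw [uIcc_of_le hτu]; exact hmono1.mono hsubI
    have hu2' : MonotoneOn x2 (uIcc τ tu) := by
      rw [uIcc_of_le hτu]; exact hmono2.mono hsubI
    have e1 : ∫ t in τ..tu, x1 t = φ tu - φ τ :=
      riemann_squeeze τ tu hτu x1 φ (hmono1.mono hsubI)
        (fun s hs t ht' => hsubgrad1 s (hsubI hs) t (hsubI ht'))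
    have e2 : ∫ t in τ..tu, x2 t = ψ tu - ψ τ :=
      riemann_squeeze τ tu hτu x2 ψ (hmono2.mono hsubI)
        (fun s hs t ht' => hsubgrad2 s (hsubI hs) t (hsubI ht'))
    rw [MeasureTheory.integral_Icc_eq_integral_Ioc, ← intervalIntegral.integral_of_le hτu,
      intervalIntegral.integral_sub hu1'.intervalIntegrable hu2'.intervalIntegrable, e1, e2]
    simp only [hddef]
    ring
  -- integrability helper
  haveI : IsFiniteMeasure (volume.restrict (Icc tl tu)) :=
    ⟨by rw [Measure.restrict_apply_univ]; exact measure_Icc_lt_top⟩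
  have hIntOn : ∀ (F : ℝ → ℝ) (C : ℝ), Measurable F → (∀ t ∈ Icc tl tu, |F t| ≤ C) →
      IntegrableOn F (Icc tl tu) volume := by
    intro F C hFm hFb
    apply Integrable.mono' (integrable_const |C|) hFm.aestronglyMeasurable
    filter_upwards [ae_restrict_mem measurableSet_Icc] with t htm
    exact le_trans (hFb t htm) (le_abs_self C)
  have hhb : ∀ t ∈ Icc tl tu, |x1 t - x2 t| ≤ H := by
    intro t ht'
    have h1 := (hsel1 t ht').1
    have h2 := (hsel2 t ht').1
    rw [abs_le]
    simp only [hHdef, mem_Icc] at *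
    constructor <;> linarith
  -- the clipping companion
  set Gs : ℝ → ℝ := fun t => max (x1 t - m) (min (x2 t) (x1 t + m)) with hGsdef
  have hGsm : Measurable Gs :=
    (hm1.sub measurable_const).max (hm2.min (hm1.add measurable_const))
  have hmonoGs : MonotoneOn Gs (Icc tl tu) := by
    intro s hs t ht' hst
    have h1 := hmono1 hs ht' hst
    have h2 := hmono2 hs ht' hst
    simp only [hGsdef]
    exact max_le_max (by linarith) (min_le_min h2 (by linarith))
  have hGsmem : ∀ t ∈ Icc tl tu, xl ≤ Gs t ∧ Gs t ≤ xu := by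
    intro t ht'
    have h1 := (hsel1 t ht').1
    have h2 := (hsel2 t ht').1
    simp only [mem_Icc] at h1 h2
    constructor
    · exact le_trans (le_min h2.1 (by linarith)) (le_max_right _ _)
    · exact max_le (by linarith) (le_trans (min_le_left _ _) h2.2)
  have hkb : ∀ t : ℝ, |x1 t - Gs t| ≤ m := by
    intro t
    rw [abs_le]
    constructor
    · have : Gs t ≤ x1 t + m := by
        simp only [hGsdef]
        exact max_le (by linarith) (min_le_right _ _)
      linarith
    · have : x1 t - m ≤ Gs t := by
        simp only [hGsdef]; exact le_max_left _ _
      linarith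
  -- pointwise clamp inequality
  have hpoint : ∀ t ∈ Icc tl tu, |x1 t - x2 t| ≤
      (x1 t - Gs t) * (x1 t - x2 t) / m + m / 4 := by
    intro t _
    rcases le_or_gt m (x1 t - x2 t) with hc | hc
    · have hGs : Gs t = x1 t - m := by
        simp only [hGsdef]
        exact max_eq_left (le_trans (min_le_left _ _) (by linarith))
      rw [hGs, abs_of_nonneg (by linarith)]
      have he : (x1 t - (x1 t - m)) * (x1 t - x2 t) / m = x1 t - x2 t := by
        field_simp
        ring
      rw [he]
      linarith
    rcases le_or_gt (x1 t - x2 t) (-m) with hc2 | hc2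
    · have hGs : Gs t = x1 t + m := by
        simp only [hGsdef]
        rw [min_eq_right (by linarith : x1 t + m ≤ x2 t)]
        exact max_eq_right (by linarith)
      rw [hGs, abs_of_nonpos (by linarith)]
      have he : (x1 t - (x1 t + m)) * (x1 t - x2 t) / m = -(x1 t - x2 t) := by
        field_simp
        ring
      rw [he]
      linarith
    · have hGs : Gs t = x2 t := by
        simp only [hGsdef]
        rw [min_eq_left (by linarith : x2 t ≤ x1 t + m)]
        exact max_eq_right (by linarith)
      rw [hGs]
      have key : m * |x1 t - x2 t| ≤ (x1 t - x2 t) * (x1 t - x2 t) + m * m / 4 := by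
        nlinarith [sq_abs (x1 t - x2 t), sq_nonneg (|x1 t - x2 t| - m / 2), abs_nonneg (x1 t - x2 t)]
      rw [← mul_le_mul_iff_right₀ hm0]
      calc m * |x1 t - x2 t| ≤ (x1 t - x2 t) * (x1 t - x2 t) + m * m / 4 := key
        _ = m * ((x1 t - x2 t) * (x1 t - x2 t) / m + m / 4) := by field_simp
  -- main integral comparison
  have hint_abs : IntegrableOn (fun t => |x1 t - x2 t|) (Icc tl tu) volume :=
    hIntOn _ H (hm1.sub hm2).abs (fun t ht' => by rw [abs_abs]; exact hhb t ht')
  have hint_kh : IntegrableOn (fun t => (x1 t - Gs t) * (x1 t - x2 t)) (Icc tl tu) volume := by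
    apply hIntOn _ (m * H) ((hm1.sub hGsm).mul (hm1.sub hm2))
    intro t ht'
    rw [Pi.mul_apply, abs_mul]
    exact mul_le_mul (hkb t) (hhb t ht') (abs_nonneg _) hm0.le
  have hint_rhs : IntegrableOn (fun t => (x1 t - Gs t) * (x1 t - x2 t) / m + m / 4)
      (Icc tl tu) volume := by
    apply Integrable.add _ (integrable_const _)
    exact hint_kh.div_const m
  have step1 : (∫ t in Icc tl tu, |x1 t - x2 t|) ≤
      ∫ t in Icc tl tu, ((x1 t - Gs t) * (x1 t - x2 t) / m + m / 4) :=
    setIntegral_mono_on hint_abs hint_rhs measurableSet_Icc hpoint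
  have step2 : (∫ t in Icc tl tu, ((x1 t - Gs t) * (x1 t - x2 t) / m + m / 4)) =
      (∫ t in Icc tl tu, (x1 t - Gs t) * (x1 t - x2 t)) / m + m / 4 * W := by
    rw [MeasureTheory.integral_add (hint_kh.div_const m) (integrable_const _),
      MeasureTheory.integral_div, MeasureTheory.setIntegral_const, measureReal_def, Real.volume_Icc,
      smul_eq_mul, ENNReal.toReal_ofReal (by linarith)]
    simp only [hWdef]
    ring
  -- decomposition into monotone parts
  have hE1 := mono_part_bound tl tu δ H ht.le hδ.le x1 (fun t => x1 t - x2 t) d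
    hmono1 hm1 (hm1.sub hm2) hhb hd hdb
  have hE2 := mono_part_bound tl tu δ H ht.le hδ.le Gs (fun t => x1 t - x2 t) d
    hmonoGs hGsm (hm1.sub hm2) hhb hd hdb
  have hstepii : (∫ t in Icc tl tu, (x1 t - Gs t) * (x1 t - x2 t)) =
      (∫ t in Icc tl tu, (x1 t - x1 tl) * (x1 t - x2 t))
      - (∫ t in Icc tl tu, (Gs t - Gs tl) * (x1 t - x2 t))
      + (x1 tl - Gs tl) * (d tu - d tl) := by
    have hfun : (fun t => (x1 t - Gs t) * (x1 t - x2 t)) =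
        fun t => (x1 t - x1 tl) * (x1 t - x2 t) - (Gs t - Gs tl) * (x1 t - x2 t)
          + (x1 tl - Gs tl) * (x1 t - x2 t) := by
      funext t; ring
    have hint_a : IntegrableOn (fun t => (x1 t - x1 tl) * (x1 t - x2 t)) (Icc tl tu) volume := by
      apply hIntOn _ (H * H) ((hm1.sub measurable_const).mul (hm1.sub hm2))
      intro t ht'
      rw [Pi.mul_apply, abs_mul]
      have h1 := (hsel1 t ht').1
      have h2 := (hsel1 tl htl).1
      simp only [mem_Icc] at h1 h2
      have : |x1 t - x1 tl| ≤ H := by rw [abs_le]; simp only [hHdef]; constructor <;> linarith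
      exact mul_le_mul this (hhb t ht') (abs_nonneg _) (by linarith)
    have hint_b : IntegrableOn (fun t => (Gs t - Gs tl) * (x1 t - x2 t)) (Icc tl tu) volume := by
      apply hIntOn _ (H * H) ((hGsm.sub measurable_const).mul (hm1.sub hm2))
      intro t ht'
      rw [Pi.mul_apply, abs_mul]
      have h1 := hGsmem t ht'
      have h2 := hGsmem tl htl
      have : |Gs t - Gs tl| ≤ H := by rw [abs_le]; simp only [hHdef]; constructor <;> linarith
      exact mul_le_mul this (hhb t ht') (abs_nonneg _) (by linarith)
    have hint_c : IntegrableOn (fun t => (x1 tl - Gs tl) * (x1 t - x2 t)) (Icc tl tu) volume := by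
      apply hIntOn _ (m * H) (measurable_const.mul (hm1.sub hm2))
      intro t ht'
      rw [Pi.mul_apply, abs_mul]
      exact mul_le_mul (hkb tl) (hhb t ht') (abs_nonneg _) hm0.le
    have hint_ab : IntegrableOn (fun t => (x1 t - x1 tl) * (x1 t - x2 t)
        - (Gs t - Gs tl) * (x1 t - x2 t)) (Icc tl tu) volume := hint_a.sub hint_b
    rw [hfun]
    rw [MeasureTheory.integral_add hint_ab hint_c]
    rw [MeasureTheory.integral_sub hint_a hint_b]
    rw [MeasureTheory.integral_const_mul]
    rw [hd tl htl]
  -- the 2H budget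
  have hbudget : (x1 tu - x1 tl) + (Gs tu - Gs tl) + |x1 tl - Gs tl| + |x1 tu - Gs tu| ≤ 2 * H := by
    have h1 := (hsel1 tl htl).1
    have h2 := (hsel1 tu htu).1
    have h3 := hGsmem tl htl
    have h4 := hGsmem tu htu
    simp only [mem_Icc] at h1 h2
    rcases abs_cases (x1 tl - Gs tl) with ⟨e1, _⟩ | ⟨e1, _⟩ <;>
      rcases abs_cases (x1 tu - Gs tu) with ⟨e2, _⟩ | ⟨e2, _⟩ <;>
      rw [e1, e2] <;> simp only [hHdef] <;> linarith
  have hkhbound : |∫ t in Icc tl tu, (x1 t - Gs t) * (x1 t - x2 t)| ≤ 2 * δ * H := by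
    have halg : (∫ t in Icc tl tu, (x1 t - Gs t) * (x1 t - x2 t)) =
        ((∫ t in Icc tl tu, (x1 t - x1 tl) * (x1 t - x2 t)) - (x1 tu - x1 tl) * d tu)
        - ((∫ t in Icc tl tu, (Gs t - Gs tl) * (x1 t - x2 t)) - (Gs tu - Gs tl) * d tu)
        + ((x1 tu - Gs tu) * d tu - (x1 tl - Gs tl) * d tl) := by
      rw [hstepii]; ring
    rw [halg]
    have hd1 := hdb tu htu
    have hd2 := hdb tl htl
    have b1 : |(x1 tu - Gs tu) * d tu| ≤ |x1 tu - Gs tu| * δ := by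
      rw [abs_mul]
      exact mul_le_mul_of_nonneg_left hd1 (abs_nonneg _)
    have b2 : |(x1 tl - Gs tl) * d tl| ≤ |x1 tl - Gs tl| * δ := by
      rw [abs_mul]
      exact mul_le_mul_of_nonneg_left hd2 (abs_nonneg _)
    have hΔ1 : 0 ≤ x1 tu - x1 tl := by
      have := hmono1 htl htu ht.le; linarith
    have hΔ2 : 0 ≤ Gs tu - Gs tl := by
      have := hmonoGs htl htu ht.le; linarith
    set A1 : ℝ := (∫ t in Icc tl tu, (x1 t - x1 tl) * (x1 t - x2 t)) - (x1 tu - x1 tl) * d tu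
      with hA1def
    set A2 : ℝ := (∫ t in Icc tl tu, (Gs t - Gs tl) * (x1 t - x2 t)) - (Gs tu - Gs tl) * d tu
      with hA2def
    have t1 : |A1 - A2 + ((x1 tu - Gs tu) * d tu - (x1 tl - Gs tl) * d tl)| ≤
        |A1| + |A2| + |(x1 tu - Gs tu) * d tu| + |(x1 tl - Gs tl) * d tl| := by
      calc |A1 - A2 + ((x1 tu - Gs tu) * d tu - (x1 tl - Gs tl) * d tl)|
          ≤ |A1 - A2| + |(x1 tu - Gs tu) * d tu - (x1 tl - Gs tl) * d tl| := abs_add_le _ _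
        _ ≤ (|A1| + |A2|) + (|(x1 tu - Gs tu) * d tu| + |(x1 tl - Gs tl) * d tl|) :=
            add_le_add (norm_sub_le A1 A2) (norm_sub_le ((x1 tu - Gs tu) * d tu) ((x1 tl - Gs tl) * d tl))
        _ = _ := by ring
    have hbud' : δ * ((x1 tu - x1 tl) + (Gs tu - Gs tl) + |x1 tl - Gs tl| + |x1 tu - Gs tu|)
        ≤ δ * (2 * H) := mul_le_mul_of_nonneg_left hbudget hδ.le
    have := le_trans t1 (by linarith [hE1, hE2, b1, b2] :
        |A1| + |A2| + |(x1 tu - Gs tu) * d tu| + |(x1 tl - Gs tl) * d tl| ≤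
        δ * (x1 tu - x1 tl) + δ * (Gs tu - Gs tl) + |x1 tu - Gs tu| * δ + |x1 tl - Gs tl| * δ)
    nlinarith [this]
  -- finish
  have final1 : (∫ t in Icc tl tu, |x1 t - x2 t|) ≤ (2 * δ * H) / m + m / 4 * W := by
    rw [step2] at step1
    have : (∫ t in Icc tl tu, (x1 t - Gs t) * (x1 t - x2 t)) / m ≤ (2 * δ * H) / m :=
      (div_le_div_iff_of_pos_right hm0).mpr (le_trans (le_abs_self _) hkhbound)
    linarith
  have final2 : (2 * δ * H) / m + m / 4 * W = η * (H + W) / 2 := by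
    have h2δ : 2 * δ = η ^ 2 := hηsq.symm
    rw [h2δ, hmdef]
    field_simp
    ring
  rw [← final2]
  exact final1
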